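/- Let p ≥ 1 be a real number. For every x in the open interval (0,1), the function a(x) := (1/2)·x·(1 - x^p)^(1/p) + ∫_x^1 (1 - t^p)^(1/p) dt has derivative at x equal to -(1 - x^p)^(1/p - 1)/2. -/

import Mathlib

open Real intervalIntegral

/-- The sector-area function `a(x) = (1/2) x (1-x^p)^(1/p) + ∫_x^1 (1-t^p)^(1/p) dt`
has derivative `-(1-x^p)^(1/p - 1)/2` at every `x ∈ (0,1)`. -/
theorem sector_area_deriv (p : ℝ) (hp : 1 ≤ p) :
    ∀ x ∈ Set.Ioo (0 : ℝ) 1,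
      HasDerivAt
        (fun x : ℝ => (1 / 2) * x * (1 - x ^ p) ^ (1 / p)
          + ∫ t in x..1, (1 - t ^ p) ^ (1 / p))
        (-(1 - x ^ p) ^ (1 / p - 1) / 2) x := by
  intro x hx
  obtain ⟨hx0, hx1⟩ := hx
  have hp0 : (0:ℝ) < p := lt_of_lt_of_le one_pos hp
  have hxp : x ^ p < 1 := by
    calc x ^ p < 1 ^ p := Real.rpow_lt_rpow hx0.le hx1 hp0
    _ = 1 := Real.one_rpow p
  have h1 : (0:ℝ) < 1 - x ^ p := by linarith
  have hcont : Continuous fun t : ℝ => (1 - t ^ p) ^ (1 / p) := by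
    rw [continuous_iff_continuousAt]
    intro t
    have hin : ContinuousAt (fun t : ℝ => 1 - t ^ p) t :=
      continuousAt_const.sub (Real.continuousAt_rpow_const t p (Or.inr hp0.le))
    exact (Real.continuousAt_rpow_const _ (1/p)
      (Or.inr (by positivity))).comp hin
  have hint : HasDerivAt (fun u : ℝ => ∫ t in u..1, (1 - t ^ p) ^ (1 / p))
      (-(1 - x ^ p) ^ (1 / p)) x :=
    intervalIntegral.integral_hasDerivAt_left (hcont.intervalIntegrable x 1)
      (hcont.stronglyMeasurableAtFilter _ _) hcont.continuousAt
  have hdx : HasDerivAt (fun y : ℝ => y ^ p) (p * x ^ (p - 1)) x :=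
    Real.hasDerivAt_rpow_const (Or.inl hx0.ne')
  have hinner : HasDerivAt (fun y : ℝ => 1 - y ^ p) (-(p * x ^ (p - 1))) x := by
    simpa using hdx.const_sub (1:ℝ)
  have houter : HasDerivAt (fun z : ℝ => z ^ (1/p))
      ((1/p) * (1 - x ^ p) ^ (1/p - 1)) (1 - x ^ p) :=
    Real.hasDerivAt_rpow_const (Or.inl h1.ne')
  have hcomp : HasDerivAt (fun y : ℝ => (1 - y ^ p) ^ (1/p))
      ((1/p) * (1 - x ^ p) ^ (1/p - 1) * (-(p * x ^ (p - 1)))) x :=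
    by have h := houter.comp x hinner; exact h
  have hlin : HasDerivAt (fun y : ℝ => (1/2 : ℝ) * y) (1/2) x := by
    simpa using (hasDerivAt_id x).const_mul (1/2 : ℝ)
  have hprod := hlin.mul hcomp
  have total := hprod.add hint
  convert total using 1
  case e'_4 => rfl
  case e'_5 => rfl
  case e'_8 => rfl
  have e1 : (1 - x ^ p) ^ (1/p) = (1 - x ^ p) ^ (1/p - 1) * (1 - x ^ p) := by
    rw [← Real.rpow_add_one h1.ne']
    ring_nf
  have e2 : x * x ^ (p - 1) = x ^ p := by
    rw [← Real.rpow_one_add' hx0.le (by linarith)]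
    ring_nf
  have e3 : 1/2 * x * (1/p * (1 - x ^ p) ^ (1/p - 1) * -(p * x ^ (p - 1)))
      = -(1/2) * ((1 - x ^ p) ^ (1/p - 1) * x ^ p) := by
    rw [← e2]
    field_simp
  rw [e1, e3]
  ring
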